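/- Let a, b be nonzero integers with a/b = p/q in lowest terms where both p and q are odd. Then |∫₀¹ sgn(cos(2π a t)·cos(2π b t)) dt| = 1/|pq|. -/

import Mathlib

open MeasureTheory Real Set

/-- The cosine sign correlation: the normalized measure of the set of `x ∈ [0, 2π]`
where all `cos (aᵢ x)` are positive or all are negative. -/
noncomputable def cosP (n : ℕ) (a : Fin n → ℕ) : ℝ :=
  (volume {x : ℝ | x ∈ Icc 0 (2 * π) ∧
    ((∀ i, 0 < Real.cos (a i * x)) ∨ (∀ i, Real.cos (a i * x) < 0))}).toReal / (2 * π)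


theorem innerSum13 (Q c : ℕ) (hQ : 0 < Q) (hQ2 : Q % 2 = 1) (hc : c < 4) :
    (∑ n ∈ Finset.range Q, ((-1:ℤ))^((4*n+c+Q)/(2*Q))) =
      if (c+Q) % 4 ≤ 1 then 1 else -1 := by
  have h1 : ∀ n ∈ Finset.range Q, ((-1:ℤ))^((4*n+c+Q)/(2*Q)) =
      if Q ≤ 4*n+c ∧ 4*n+c < 3*Q then -1 else (1:ℤ) := by
    intro n hn
    simp only [Finset.mem_range] at hn
    by_cases h : Q ≤ 4*n+c ∧ 4*n+c < 3*Q
    · have : (4*n+c+Q)/(2*Q) = 1 := Nat.div_eq_of_lt_le (by omega) (by omega)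
      simp [this, h]
    · rcases Nat.lt_or_ge (4*n+c) Q with h2 | h2
      · have : (4*n+c+Q)/(2*Q) = 0 := Nat.div_eq_of_lt (by omega)
        simp [this, h]
      · have h3 : 3*Q ≤ 4*n+c := by omega
        have : (4*n+c+Q)/(2*Q) = 2 := Nat.div_eq_of_lt_le (by omega) (by omega)
        simp [this, h]
  rw [Finset.sum_congr rfl h1, Finset.sum_ite]
  have hset : Finset.filter (fun n => Q ≤ 4*n+c ∧ 4*n+c < 3*Q) (Finset.range Q)
      = Finset.Ico ((Q-c+3)/4) ((3*Q-c+3)/4) := by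
    ext n
    simp only [Finset.mem_filter, Finset.mem_range, Finset.mem_Ico]
    omega
  have hcards := Finset.card_filter_add_card_filter_not
    (s := Finset.range Q) (fun n => Q ≤ 4*n+c ∧ 4*n+c < 3*Q)
  rw [Finset.card_range, hset, Nat.card_Ico] at hcards
  simp only [Finset.sum_const, nsmul_eq_mul, mul_one, mul_neg_one, hset, Nat.card_Ico]
  have key : 2*((3*Q-c+3)/4 - (Q-c+3)/4) = (if (c+Q) % 4 ≤ 1 then Q - 1 else Q+1) := by
    split <;> omega
  split at key <;> rename_i hsp <;> simp only [hsp, if_true, if_false] <;> push_cast <;> omega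

theorem perApply13 (f : ℕ → ℤ) (K : ℕ) (hf : ∀ m, f (m + K) = f m) :
    ∀ k r, f (r + K * k) = f r := by
  intro k
  induction k with
  | zero => simp
  | succ k ih =>
    intro r
    have : r + K * (k+1) = (r + K * k) + K := by ring
    rw [this, hf, ih]

theorem crtSum13 (P Q : ℕ) (hP : 0 < P) (hQ : 0 < Q) (hco : Nat.Coprime P Q)
    (g h : ℕ → ℤ) (hg : ∀ n, g (n + Q) = g n) (hh : ∀ n, h (n + P) = h n) :
    (∑ n ∈ Finset.range (P * Q), g n * h n) =
      (∑ n ∈ Finset.range Q, g n) * (∑ n ∈ Finset.range P, h n) := by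
  have hgm : ∀ n, g (n % Q) = g n := by
    intro n
    conv_rhs => rw [← Nat.mod_add_div n Q]
    rw [perApply13 g Q hg]
  have hhm : ∀ n, h (n % P) = h n := by
    intro n
    conv_rhs => rw [← Nat.mod_add_div n P]
    rw [perApply13 h P hh]
  rw [Finset.sum_mul_sum]
  rw [← Finset.sum_product']
  apply Finset.sum_bij (i := fun n _ => ((n % Q, n % P) : ℕ × ℕ))
  · intro n hn
    simp only [Finset.mem_product, Finset.mem_range]
    exact ⟨Nat.mod_lt _ hQ, Nat.mod_lt _ hP⟩
  · intro n1 h1 n2 h2 heq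
    simp only [Prod.mk.injEq] at heq
    simp only [Finset.mem_range] at h1 h2
    have hm : n1 ≡ n2 [MOD Q * P] :=
      (Nat.modEq_and_modEq_iff_modEq_mul hco.symm).mp ⟨heq.1, heq.2⟩
    unfold Nat.ModEq at hm
    rw [Nat.mod_eq_of_lt (mul_comm P Q ▸ h1), Nat.mod_eq_of_lt (mul_comm P Q ▸ h2)] at hm
    exact hm
  · -- surjectivity
    intro b hb
    simp only [Finset.mem_product, Finset.mem_range] at hb
    -- find n < P*Q with n % Q = b.1, n % P = b.2 via CRT
    have := Nat.chineseRemainder hco b.2 b.1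
    obtain ⟨n, hn1, hn2⟩ := this
    refine ⟨n % (P*Q), by simp [Finset.mem_range]; exact Nat.mod_lt _ (by positivity), ?_⟩
    have e1 : n % (P*Q) % Q = n % Q := Nat.mod_mod_of_dvd n ⟨P, mul_comm P Q⟩
    have e2 : n % (P*Q) % P = n % P := Nat.mod_mod_of_dvd n ⟨Q, rfl⟩
    have : n % Q = b.1 % Q := hn2
    have hb1 : n % Q = b.1 := by rwa [Nat.mod_eq_of_lt hb.1] at this
    have : n % P = b.2 % P := hn1
    have hb2 : n % P = b.2 := by rwa [Nat.mod_eq_of_lt hb.2] at this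
    simp [e1, e2, hb1, hb2]
  · intro n hn
    simp only
    rw [hgm, hhm]

-- subcase: n % (P*Q) issue: Nat.ModEq direction check

theorem blockReindex13 (f : ℕ → ℤ) (K : ℕ) :
    (∑ m ∈ Finset.range (4 * K), f m) =
      ∑ c ∈ Finset.range 4, ∑ n ∈ Finset.range K, f (4 * n + c) := by
  rw [← Finset.sum_product']
  apply Finset.sum_nbij' (i := fun m => ((m % 4, m / 4) : ℕ × ℕ))
    (j := fun p => 4 * p.2 + p.1)
  all_goals
    simp only [Finset.mem_product, Finset.mem_range, Prod.mk.injEq, Prod.forall]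
  · intro m hm; omega
  · intro a b h; omega
  · intro m hm; omega
  · intro a b h; omega
  · intro m hm; congr 1; omega

theorem SEval13 (P Q : ℕ) (hP : 0 < P) (hQ : 0 < Q) (hP2 : P % 2 = 1) (hQ2 : Q % 2 = 1)
    (hco : Nat.Coprime P Q) :
    (∑ m ∈ Finset.range (4 * (P * Q)), (-1:ℤ)^((m+Q)/(2*Q) + (m+P)/(2*P))) = 4 ∨
    (∑ m ∈ Finset.range (4 * (P * Q)), (-1:ℤ)^((m+Q)/(2*Q) + (m+P)/(2*P))) = -4 := by
  rw [blockReindex13]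
  have hinner : ∀ c ∈ Finset.range 4,
      (∑ n ∈ Finset.range (P * Q), (-1:ℤ)^((4*n+c+Q)/(2*Q) + (4*n+c+P)/(2*P))) =
      (if (c+Q) % 4 ≤ 1 then (1:ℤ) else -1) * (if (c+P) % 4 ≤ 1 then (1:ℤ) else -1) := by
    intro c hc
    simp only [Finset.mem_range] at hc
    have hsplit : ∀ n, (-1:ℤ)^((4*n+c+Q)/(2*Q) + (4*n+c+P)/(2*P)) =
        ((-1:ℤ)^((4*n+c+Q)/(2*Q))) * ((-1:ℤ)^((4*n+c+P)/(2*P))) := fun n => pow_add _ _ _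
    rw [Finset.sum_congr rfl (fun n _ => hsplit n)]
    rw [crtSum13 P Q hP hQ hco _ _ ?_ ?_]
    · rw [innerSum13 Q c hQ hQ2 hc, innerSum13 P c hP hP2 hc]
    · intro n
      have : 4*(n+Q)+c+Q = (4*n+c+Q) + (2*Q)*2 := by ring
      rw [this, Nat.add_mul_div_left _ _ (by omega), pow_add]
      norm_num
    · intro n
      have : 4*(n+P)+c+P = (4*n+c+P) + (2*P)*2 := by ring
      rw [this, Nat.add_mul_div_left _ _ (by omega), pow_add]
      norm_num
  rw [Finset.sum_congr rfl hinner]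
  simp only [Finset.sum_range_succ, Finset.sum_range_zero, zero_add]
  have hQ4 : Q % 4 = 1 ∨ Q % 4 = 3 := by omega
  have hP4 : P % 4 = 1 ∨ P % 4 = 3 := by omega
  rcases hQ4 with hQ4 | hQ4 <;> rcases hP4 with hP4 | hP4
  · left
    rw [if_pos (by omega), if_pos (by omega), if_neg (by omega), if_neg (by omega),
      if_neg (by omega), if_neg (by omega), if_pos (by omega), if_pos (by omega)]
    ring
  · right
    rw [if_pos (by omega), if_neg (by omega), if_neg (by omega), if_pos (by omega),
      if_neg (by omega), if_pos (by omega), if_pos (by omega), if_neg (by omega)]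
    ring
  · right
    rw [if_neg (by omega), if_pos (by omega), if_pos (by omega), if_neg (by omega),
      if_pos (by omega), if_neg (by omega), if_neg (by omega), if_pos (by omega)]
    ring
  · left
    rw [if_neg (by omega), if_neg (by omega), if_pos (by omega), if_pos (by omega),
      if_pos (by omega), if_pos (by omega), if_neg (by omega), if_neg (by omega)]
    ring


theorem cosSign13 (u : ℝ) (k : ℕ) (h1 : (k:ℝ) < 2*u + 1/2) (h2 : 2*u + 1/2 < k + 1) :
    (Even k → 0 < Real.cos (2*π*u)) ∧ (¬ Even k → Real.cos (2*π*u) < 0) := by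
  rcases Nat.even_or_odd k with hk | hk
  · refine ⟨fun _ => ?_, fun h => absurd hk h⟩
    obtain ⟨n, hn⟩ := hk
    have hcast : (k:ℝ) = 2*n := by rw [hn]; push_cast; ring
    have e : 2*π*u = 2*π*(u - n) + n*(2*π) := by ring
    rw [e, Real.cos_add_nat_mul_two_pi]
    apply Real.cos_pos_of_mem_Ioo
    constructor
    · have : -(1/4 : ℝ) < u - n := by rw [hcast] at h1; linarith
      nlinarith [Real.pi_pos]
    · have : u - n < 1/4 := by rw [hcast] at h2; push_cast at h2; linarith
      nlinarith [Real.pi_pos]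
  · refine ⟨fun h => absurd h (Nat.not_even_iff_odd.mpr hk), fun _ => ?_⟩
    obtain ⟨n, hn⟩ := hk
    have hcast : (k:ℝ) = 2*n+1 := by rw [hn]; push_cast; ring
    have e : 2*π*u = 2*π*(u - n) + n*(2*π) := by ring
    rw [e, Real.cos_add_nat_mul_two_pi]
    apply Real.cos_neg_of_pi_div_two_lt_of_lt
    · have : (1/4:ℝ) < u - n := by rw [hcast] at h1; linarith
      nlinarith [Real.pi_pos]
    · have : u - n < 3/4 := by rw [hcast] at h2; push_cast at h2; linarith
      nlinarith [Real.pi_pos]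

theorem periodSum13 (f : ℕ → ℤ) (K : ℕ) (hf : ∀ m, f (m + K) = f m) (G : ℕ) :
    ∑ m ∈ Finset.range (G * K), f m = G * ∑ m ∈ Finset.range K, f m := by
  have per : ∀ k r, f (r + K * k) = f r := by
    intro k
    induction k with
    | zero => simp
    | succ k ih =>
      intro r
      have : r + K * (k+1) = (r + K * k) + K := by ring
      rw [this, hf, ih]
  induction G with
  | zero => simp
  | succ G ih =>
    have e : (G+1) * K = G*K + K := by ring
    rw [e, Finset.sum_range_add, ih]
    have : ∀ m ∈ Finset.range K, f (G*K + m) = f m := by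
      intro m _
      have : G*K + m = m + K*G := by ring
      rw [this, per]
    rw [Finset.sum_congr rfl this]
    push_cast
    ring

-- single-factor version on a cell
theorem cellCos13 (C P G : ℕ) (hC : 0 < C) (hP : 0 < P) (hG : 0 < G)
    (N : ℕ) (hN : N = 4*G*P*C)  -- C is the "other" factor: for A = G*P, N = 4*G*P*C with C=Q
    (m : ℕ) (t : ℝ) (hl : (m:ℝ)/N < t) (hr : t < ((m:ℝ)+1)/N) :
    (Even ((m+C)/(2*C)) → 0 < Real.cos (2*π*((G*P:ℕ)*t))) ∧
    (¬ Even ((m+C)/(2*C)) → Real.cos (2*π*((G*P:ℕ)*t)) < 0) := by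
  set k := (m+C)/(2*C) with hk
  have hC0 : (0:ℝ) < C := by exact_mod_cast hC
  have hN0 : (0:ℝ) < N := by
    have : 0 < N := by rw [hN]; positivity
    exact_mod_cast this
  have hGP0 : (0:ℝ) < (G:ℝ)*(P:ℝ) := by
    have : 0 < G*P := Nat.mul_pos hG hP
    exact_mod_cast Nat.cast_pos.mpr this
  apply cosSign13
  · -- k < 2*(G*P*t) + 1/2
    have hb : (k:ℝ)*(2*C) ≤ (m:ℝ)+C := by
      have := Nat.div_mul_le_self (m+C) (2*C)
      exact_mod_cast this
    have e1 : 2*((G*P:ℕ):ℝ)*((m:ℝ)/N) + 1/2 = ((m:ℝ)+C)/(2*C) := by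
      rw [hN]
      push_cast
      field_simp
      ring
    have ht : 2*((G*P:ℕ):ℝ)*((m:ℝ)/N) < 2*((G*P:ℕ):ℝ)*t := by
      apply mul_lt_mul_of_pos_left hl
      push_cast
      linarith
    have hk' : (k:ℝ) ≤ ((m:ℝ)+C)/(2*C) := by
      rw [le_div_iff₀ (by linarith)]
      linarith
    push_cast at *
    linarith
  · have hb : (m:ℝ)+C+1 ≤ ((k:ℝ)+1)*(2*C) := by
      have h1 := Nat.div_add_mod (m+C) (2*C)
      have h2 := Nat.mod_lt (m+C) (y := 2*C) (by omega)
      have : m+C+1 ≤ (k+1)*(2*C) := by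
        have e : (k+1)*(2*C) = 2*C*k + 2*C := by ring
        rw [e]
        rw [hk]
        nlinarith [h1, h2]
      exact_mod_cast this
    have e1 : 2*((G*P:ℕ):ℝ)*(((m:ℝ)+1)/N) + 1/2 = ((m:ℝ)+C+1)/(2*C) := by
      rw [hN]
      push_cast
      field_simp
      ring
    have ht : 2*((G*P:ℕ):ℝ)*t < 2*((G*P:ℕ):ℝ)*(((m:ℝ)+1)/N) := by
      apply mul_lt_mul_of_pos_left hr
      push_cast
      linarith
    have hk' : ((m:ℝ)+C+1)/(2*C) ≤ (k:ℝ)+1 := by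
      rw [div_le_iff₀ (by linarith)]
      linarith
    push_cast at *
    linarith


theorem cellSign13 (P Q G N : ℕ) (hP : 0 < P) (hQ : 0 < Q) (hG : 0 < G)
    (hN : N = 4*G*P*Q) (m : ℕ) (t : ℝ)
    (hl : (m:ℝ)/N < t) (hr : t < ((m:ℝ)+1)/N) :
    Real.sign (Real.cos (2*π*((G*P:ℕ)*t)) * Real.cos (2*π*((G*Q:ℕ)*t))) =
      (((-1:ℤ)^((m+Q)/(2*Q)+(m+P)/(2*P)) : ℤ) : ℝ) := by
  obtain ⟨c1p, c1n⟩ := cellCos13 Q P G hQ hP hG N hN m t hl hr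
  obtain ⟨c2p, c2n⟩ := cellCos13 P Q G hP hQ hG N (by rw [hN]; ring) m t hl hr
  rcases Nat.even_or_odd ((m+Q)/(2*Q)) with h1 | h1 <;>
    rcases Nat.even_or_odd ((m+P)/(2*P)) with h2 | h2
  · rw [Real.sign_of_pos (mul_pos (c1p h1) (c2p h2)), (h1.add h2).neg_one_pow]
    norm_num
  · rw [Real.sign_of_neg (mul_neg_of_pos_of_neg (c1p h1)
      (c2n (Nat.not_even_iff_odd.mpr h2))), (h1.add_odd h2).neg_one_pow]
    norm_num
  · rw [Real.sign_of_neg (mul_neg_of_neg_of_pos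
      (c1n (Nat.not_even_iff_odd.mpr h1)) (c2p h2)), (h1.add_even h2).neg_one_pow]
    norm_num
  · rw [Real.sign_of_pos (mul_pos_of_neg_of_neg
      (c1n (Nat.not_even_iff_odd.mpr h1)) (c2n (Nat.not_even_iff_odd.mpr h2))),
      (h1.add_odd h2).neg_one_pow]
    norm_num

theorem stmt_13 (a b p q : ℤ) (ha : a ≠ 0) (hb : b ≠ 0) (hpq : IsCoprime p q)
    (hratio : a * q = b * p) (hp : Odd p) (hq : Odd q) :
    |∫ t in (0:ℝ)..1,
        Real.sign (Real.cos (2 * π * a * t) * Real.cos (2 * π * b * t))| =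
      1 / |(p : ℝ) * q| := by
  -- setup of natural number data
  set A := a.natAbs with hA
  set B := b.natAbs with hB
  set P := p.natAbs with hPdef
  set Q := q.natAbs with hQdef
  have hp0 : p ≠ 0 := by
    rintro rfl
    have hqu : IsUnit q := isCoprime_zero_left.mp hpq
    have : a * q = 0 := by rw [hratio]; ring
    exact ha ((mul_eq_zero.mp this).resolve_right hqu.ne_zero)
  have hq0 : q ≠ 0 := by
    rintro rfl
    have hpu : IsUnit p := isCoprime_zero_right.mp hpq
    have : b * p = 0 := by rw [← hratio]; ring
    exact hb ((mul_eq_zero.mp this).resolve_right hpu.ne_zero)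
  have hPpos : 0 < P := Int.natAbs_pos.mpr hp0
  have hQpos : 0 < Q := Int.natAbs_pos.mpr hq0
  have hApos : 0 < A := Int.natAbs_pos.mpr ha
  have hBpos : 0 < B := Int.natAbs_pos.mpr hb
  have hP2 : P % 2 = 1 := Nat.odd_iff.mp (Int.natAbs_odd.mpr hp)
  have hQ2 : Q % 2 = 1 := Nat.odd_iff.mp (Int.natAbs_odd.mpr hq)
  have hco : Nat.Coprime P Q := Int.isCoprime_iff_gcd_eq_one.mp hpq
  have hABPQ : A * Q = B * P := by
    rw [hA, hB, hPdef, hQdef, ← Int.natAbs_mul, ← Int.natAbs_mul, hratio]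
  have hPdvdA : P ∣ A := hco.dvd_of_dvd_mul_right ⟨B, by rw [hABPQ]; ring⟩
  obtain ⟨G, hGA⟩ := hPdvdA
  have hGpos : 0 < G := by
    rcases Nat.eq_zero_or_pos G with h | h
    · rw [h, mul_zero] at hGA; omega
    · exact h
  have hGB : B = G * Q := by
    have h1 : P * (G * Q) = P * B := by
      calc P * (G * Q) = (P * G) * Q := by ring
        _ = A * Q := by rw [← hGA]
        _ = B * P := hABPQ
        _ = P * B := by ring
    exact (Nat.eq_of_mul_eq_mul_left hPpos h1).symm
  have hGA' : A = G * P := by rw [hGA]; ring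
  set N : ℕ := 4 * G * P * Q with hNdef
  have hNpos : 0 < N := by positivity
  have hN0 : (N:ℝ) ≠ 0 := by
    have : (0:ℝ) < N := by exact_mod_cast hNpos
    linarith
  -- the step values
  set w : ℕ → ℤ := fun m => (-1)^((m+Q)/(2*Q)+(m+P)/(2*P)) with hw
  set f : ℝ → ℝ := fun t =>
    Real.sign (Real.cos (2*π*((G*P:ℕ)*t)) * Real.cos (2*π*((G*Q:ℕ)*t))) with hf
  -- rewrite the integrand
  have hGPA : ((G*P:ℕ):ℝ) = (A:ℝ) := by exact_mod_cast congrArg (Nat.cast : ℕ → ℝ) hGA'.symm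
  have hGQB : ((G*Q:ℕ):ℝ) = (B:ℝ) := by exact_mod_cast congrArg (Nat.cast : ℕ → ℝ) hGB.symm
  have hcosA : ∀ t : ℝ, Real.cos (2*π*(a:ℝ)*t) = Real.cos (2*π*(((G*P:ℕ):ℝ)*t)) := by
    intro t
    rw [hGPA]
    rcases Int.natAbs_eq a with h | h
    · rw [h]
      congr 1
      simp only [Int.cast_natCast]
      ring
    · rw [h,
        show 2*π*(((-(A:ℤ)):ℤ):ℝ)*t = -(2*π*((A:ℝ)*t)) from by push_cast; ring,
        Real.cos_neg]
  have hcosB : ∀ t : ℝ, Real.cos (2*π*(b:ℝ)*t) = Real.cos (2*π*(((G*Q:ℕ):ℝ)*t)) := by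
    intro t
    rw [hGQB]
    rcases Int.natAbs_eq b with h | h
    · rw [h]
      congr 1
      simp only [Int.cast_natCast]
      ring
    · rw [h,
        show 2*π*(((-(B:ℤ)):ℤ):ℝ)*t = -(2*π*((B:ℝ)*t)) from by push_cast; ring,
        Real.cos_neg]
  have hIeq : (∫ t in (0:ℝ)..1,
      Real.sign (Real.cos (2 * π * a * t) * Real.cos (2 * π * b * t))) =
      ∫ t in (0:ℝ)..1, f t := by
    apply intervalIntegral.integral_congr
    intro t _
    simp only [hf]
    rw [hcosA t, hcosB t]
  -- integral over each cell
  have hcell : ∀ m : ℕ, ∀ t : ℝ, (m:ℝ)/N < t → t < ((m:ℝ)+1)/N → f t = ((w m : ℤ):ℝ) :=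
    fun m t hl hr => cellSign13 P Q G N hPpos hQpos hGpos rfl m t hl hr
  have hstep : ∀ m : ℕ,
      IntervalIntegrable f volume ((m:ℝ)/N) (((m+1:ℕ):ℝ)/N) ∧
      (∫ x in ((m:ℝ)/N)..(((m+1:ℕ):ℝ)/N), f x) = ((w m : ℤ):ℝ) * (1/(N:ℝ)) := by
    intro m
    have hc1 : ((m+1:ℕ):ℝ) = (m:ℝ)+1 := by push_cast; ring
    rw [hc1]
    have hNR : (0:ℝ) < N := by exact_mod_cast hNpos
    have hcd : (m:ℝ)/N < ((m:ℝ)+1)/N := by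
      apply (div_lt_div_iff₀ hNR hNR).mpr
      nlinarith
    have hae : ∀ᵐ x ∂(volume : Measure ℝ),
        x ∈ Set.uIoc ((m:ℝ)/N) (((m:ℝ)+1)/N) → f x = ((w m : ℤ):ℝ) := by
      have h0 : ∀ᵐ x ∂(volume : Measure ℝ), x ∉ ({((m:ℝ)+1)/N} : Set ℝ) :=
        measure_eq_zero_iff_ae_notMem.mp Real.volume_singleton
      filter_upwards [h0] with x hx hxmem
      rw [Set.uIoc_of_le hcd.le] at hxmem
      have hx2 : x < ((m:ℝ)+1)/N := lt_of_le_of_ne hxmem.2 (by simpa using hx)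
      exact hcell m x hxmem.1 hx2
    constructor
    · rw [intervalIntegrable_iff_integrableOn_Ioc_of_le hcd.le]
      have hconst : MeasureTheory.IntegrableOn (fun _ : ℝ => ((w m : ℤ):ℝ))
          (Set.Ioc ((m:ℝ)/N) (((m:ℝ)+1)/N)) volume :=
        integrableOn_const measure_Ioc_lt_top.ne
      apply hconst.congr_fun_ae
      refine (MeasureTheory.ae_restrict_iff' measurableSet_Ioc).mpr ?_
      rw [Set.uIoc_of_le hcd.le] at hae
      filter_upwards [hae] with x hx hxmem
      exact (hx hxmem).symm
    · rw [intervalIntegral.integral_congr_ae hae, intervalIntegral.integral_const,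
        smul_eq_mul]
      have he : ((m:ℝ)+1)/N - (m:ℝ)/N = 1/(N:ℝ) := by field_simp; ring
      rw [he]
      ring
  -- sum the cell integrals
  have hsum := intervalIntegral.sum_integral_adjacent_intervals
      (μ := volume) (a := fun k : ℕ => ((k:ℝ)/N)) (n := N) (fun k _ => (hstep k).1)
  rw [Nat.cast_zero, zero_div, div_self hN0] at hsum
  have hIval : (∫ t in (0:ℝ)..1, f t) = ((∑ m ∈ Finset.range N, w m : ℤ):ℝ) * (1/(N:ℝ)) := by
    rw [← hsum, Finset.sum_congr rfl (fun k _ => (hstep k).2)]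
    push_cast
    rw [Finset.sum_mul]
  -- evaluate the discrete sum
  have hper : ∀ m, w (m + 4*(P*Q)) = w m := by
    intro m
    simp only [hw]
    have e1 : (m + 4*(P*Q) + Q) = (m+Q) + (2*Q)*(2*P) := by ring
    have e2 : (m + 4*(P*Q) + P) = (m+P) + (2*P)*(2*Q) := by ring
    rw [e1, e2, Nat.add_mul_div_left _ _ (by omega), Nat.add_mul_div_left _ _ (by omega)]
    rw [show (m+Q)/(2*Q) + 2*P + ((m+P)/(2*P) + 2*Q)
        = ((m+Q)/(2*Q) + (m+P)/(2*P)) + 2*(P+Q) from by ring, pow_add]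
    rw [pow_mul]
    norm_num
  have hNK : N = G * (4*(P*Q)) := by rw [hNdef]; ring
  have hGS : (∑ m ∈ Finset.range N, w m)
      = G * ∑ m ∈ Finset.range (4*(P*Q)), w m := by
    rw [hNK]
    exact periodSum13 w (4*(P*Q)) hper G
  have hS := SEval13 P Q hPpos hQpos hP2 hQ2 hco
  -- finish
  have hGR : (0:ℝ) < G := by exact_mod_cast hGpos
  have hPR : (0:ℝ) < P := by exact_mod_cast hPpos
  have hQR : (0:ℝ) < Q := by exact_mod_cast hQpos
  have hNR' : (N:ℝ) = 4*(G:ℝ)*(P:ℝ)*(Q:ℝ) := by rw [hNdef]; push_cast; ring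
  have hRHS : |(p:ℝ)*(q:ℝ)| = (P:ℝ)*(Q:ℝ) := by
    rw [abs_mul, ← Int.cast_abs, ← Int.cast_abs, Int.abs_eq_natAbs p, Int.abs_eq_natAbs q]
    simp only [Int.cast_natCast]
    rfl
  rw [hIeq, hIval, hRHS, hGS]
  have hval : ((G:ℝ)*4)*(1/(N:ℝ)) = 1/((P:ℝ)*Q) := by
    rw [hNR']
    field_simp
  rcases hS with h | h
  · rw [h]
    push_cast
    rw [hval, abs_of_pos (div_pos one_pos (mul_pos hPR hQR))]
  · rw [h]
    push_cast
    rw [show (G:ℝ)*(-4)*(1/(N:ℝ)) = -(((G:ℝ)*4)*(1/(N:ℝ))) from by ring, hval, abs_neg,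
      abs_of_pos (div_pos one_pos (mul_pos hPR hQR))]
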